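/- (Basic Perturbation Lemma for chain complexes.) Let A, B be chain complexes of abelian groups and (f, g, h) a strong deformation retraction from A to B: f : A → B and g : B → A are chain maps, h : A → A is a degree +1 homomorphism, with fg = 1_B, dh + hd = 1_A − gf, fh = 0, hg = 0, hh = 0. Let δ : A → A be a degree −1 homomorphism with (d+δ)² = 0 such that 1 + δh is invertible as a graded endomorphism. Set f̂ = f(1+δh)⁻¹, ĝ = (1+hδ)⁻¹g, ĥ = h(1+δh)⁻¹, and δ' = f̂ δ g. Then (d_B + δ')² = 0 and (f̂, ĝ, ĥ) is a strong deformation retraction from (A, d_A + δ) to (B, d_B + δ'): f̂ and ĝ are chain maps for the perturbed differentials, f̂ĝ = 1_B, (d+δ)ĥ + ĥ(d+δ) = 1_A − ĝf̂, f̂ĥ = 0, ĥĝ = 0, ĥĥ = 0. -/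

import Mathlib

/-- View an additive endomorphism as an element of the endomorphism ring. -/
def homOfEnd {M : Type*} [AddCommGroup M] (f : AddMonoid.End M) : M →+ M := f

/-- **Basic Perturbation Lemma.** Given a strong deformation retraction `(f,g,h)`
from a chain complex `A` (graded group `MA` with grading `𝒜` and differential `dA`)
to `B`, with side conditions `fh = 0`, `hg = 0`, `hh = 0`, and a perturbation `δ` of
`A` (degree `-1`, `(d+δ)² = 0`) such that `1 + δh` is invertible (a unit `u` of the
endomorphism ring, with inverse of degree `0`; then `1 + hδ` is also invertible, say
with inverse the unit `v⁻¹`), the maps `f̂ = f(1+δh)⁻¹`, `ĝ = (1+hδ)⁻¹g`,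
`ĥ = h(1+δh)⁻¹` and `δ' = f̂δg` satisfy `(d_B+δ')² = 0` and form a strong deformation
retraction from `(A, d_A+δ)` to `(B, d_B+δ')`. -/
theorem basic_perturbation_lemma
    {MA MB : Type*} [AddCommGroup MA] [AddCommGroup MB]
    (𝒜 : ℤ → AddSubgroup MA) (ℬ : ℤ → AddSubgroup MB)
    (dA : MA →+ MA) (dB : MB →+ MB)
    (hdAdeg : ∀ (i : ℤ), ∀ x ∈ 𝒜 i, dA x ∈ 𝒜 (i - 1))
    (hdBdeg : ∀ (i : ℤ), ∀ x ∈ ℬ i, dB x ∈ ℬ (i - 1))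
    (hdA2 : dA.comp dA = 0) (hdB2 : dB.comp dB = 0)
    (f : MA →+ MB) (g : MB →+ MA) (h δ : MA →+ MA)
    (hfdeg : ∀ (i : ℤ), ∀ x ∈ 𝒜 i, f x ∈ ℬ i)
    (hgdeg : ∀ (i : ℤ), ∀ x ∈ ℬ i, g x ∈ 𝒜 i)
    (hhdeg : ∀ (i : ℤ), ∀ x ∈ 𝒜 i, h x ∈ 𝒜 (i + 1))
    (hδdeg : ∀ (i : ℤ), ∀ x ∈ 𝒜 i, δ x ∈ 𝒜 (i - 1))
    (hfchain : f.comp dA = dB.comp f)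
    (hgchain : dA.comp g = g.comp dB)
    (hfg : f.comp g = AddMonoidHom.id MB)
    (hhom : dA.comp h + h.comp dA = AddMonoidHom.id MA - g.comp f)
    (hfh : f.comp h = 0) (hhg : h.comp g = 0) (hhh : h.comp h = 0)
    (hδ2 : (dA + δ).comp (dA + δ) = 0)
    (u : (AddMonoid.End MA)ˣ)
    (hu : homOfEnd (u : AddMonoid.End MA) = AddMonoidHom.id MA + δ.comp h)
    (hudeg : ∀ (i : ℤ), ∀ x ∈ 𝒜 i, homOfEnd ((u⁻¹ : (AddMonoid.End MA)ˣ) : AddMonoid.End MA) x ∈ 𝒜 i)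
    (v : (AddMonoid.End MA)ˣ)
    (hv : homOfEnd (v : AddMonoid.End MA) = AddMonoidHom.id MA + h.comp δ)
    (hvdeg : ∀ (i : ℤ), ∀ x ∈ 𝒜 i, homOfEnd ((v⁻¹ : (AddMonoid.End MA)ˣ) : AddMonoid.End MA) x ∈ 𝒜 i) :
    let uinv : MA →+ MA := homOfEnd ((u⁻¹ : (AddMonoid.End MA)ˣ) : AddMonoid.End MA)
    let vinv : MA →+ MA := homOfEnd ((v⁻¹ : (AddMonoid.End MA)ˣ) : AddMonoid.End MA)
    let f' : MA →+ MB := f.comp uinv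
    let g' : MB →+ MA := vinv.comp g
    let h' : MA →+ MA := h.comp uinv
    let δ' : MB →+ MB := (f'.comp δ).comp g
    -- the perturbed differential on B squares to zero:
    (dB + δ').comp (dB + δ') = 0 ∧
    -- degrees: f̂, ĝ have degree 0, ĥ degree +1, δ' degree -1:
    (∀ (i : ℤ), ∀ x ∈ 𝒜 i, f' x ∈ ℬ i) ∧
    (∀ (i : ℤ), ∀ x ∈ ℬ i, g' x ∈ 𝒜 i) ∧
    (∀ (i : ℤ), ∀ x ∈ 𝒜 i, h' x ∈ 𝒜 (i + 1)) ∧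
    (∀ (i : ℤ), ∀ x ∈ ℬ i, δ' x ∈ ℬ (i - 1)) ∧
    -- f̂, ĝ are chain maps for the perturbed differentials:
    f'.comp (dA + δ) = (dB + δ').comp f' ∧
    (dA + δ).comp g' = g'.comp (dB + δ') ∧
    -- SDR identities:
    f'.comp g' = AddMonoidHom.id MB ∧
    (dA + δ).comp h' + h'.comp (dA + δ) = AddMonoidHom.id MA - g'.comp f' ∧
    f'.comp h' = 0 ∧ h'.comp g' = 0 ∧ h'.comp h' = 0 := by
  intro uinv vinv f' g' h' δ'
  -- End-ring copies of all the maps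
  let U : AddMonoid.End MA := uinv
  let V : AddMonoid.End MA := vinv
  let D : AddMonoid.End MA := dA
  let Δ : AddMonoid.End MA := δ
  let H : AddMonoid.End MA := h
  let P : AddMonoid.End MA := g.comp f
  -- unit equations
  have hu2 : (u : AddMonoid.End MA) = 1 + Δ * H := hu
  have hv2 : (v : AddMonoid.End MA) = 1 + H * Δ := hv
  have hU1 : (1 + Δ * H) * U = 1 := by rw [← hu2]; exact u.mul_inv
  have hU2 : U * (1 + Δ * H) = 1 := by rw [← hu2]; exact u.inv_mul
  have hV1 : (1 + H * Δ) * V = 1 := by rw [← hv2]; exact v.mul_inv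
  have hV2 : V * (1 + H * Δ) = 1 := by rw [← hv2]; exact v.inv_mul
  -- ring copies of hypotheses
  have hdd : D * D = 0 := hdA2
  have hh2 : H * H = 0 := hhh
  have hhom2 : D * H + H * D = 1 - P := hhom
  have hδ22 : (D + Δ) * (D + Δ) = 0 := hδ2
  have esq : D * Δ + Δ * D + Δ * Δ = 0 := by
    have e1 : D * Δ + Δ * D + Δ * Δ = (D + Δ) * (D + Δ) - D * D := by noncomm_ring
    rw [e1, hδ22, hdd, sub_zero]
  have hP : P = 1 - (D * H + H * D) := by
    rw [hhom2, sub_sub_cancel]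
  -- basic inverse identities
  have huu1 : U + Δ * H * U = 1 := by have t := hU1; rwa [add_mul, one_mul] at t
  have eδhU : Δ * H * U = 1 - U := eq_sub_of_add_eq' huu1
  have eU1 : U = 1 - Δ * H * U := eq_sub_of_add_eq huu1
  have huu2 : U + U * (Δ * H) = 1 := by have t := hU2; rwa [mul_add, mul_one] at t
  have eUΔH : U * (Δ * H) = 1 - U := eq_sub_of_add_eq' huu2
  have eU2 : U = 1 - U * (Δ * H) := eq_sub_of_add_eq huu2
  have hvv1 : V + H * Δ * V = 1 := by have t := hV1; rwa [add_mul, one_mul] at t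
  have eHΔV : H * Δ * V = 1 - V := eq_sub_of_add_eq' hvv1
  have eV1 : V = 1 - H * Δ * V := eq_sub_of_add_eq hvv1
  have hvv2 : V + V * (H * Δ) = 1 := by have t := hV2; rwa [mul_add, mul_one] at t
  have eVHΔ : V * (H * Δ) = 1 - V := eq_sub_of_add_eq' hvv2
  -- derived identities
  have eUh : U * H = H := by
    calc U * H = (1 - U * (Δ * H)) * H := by rw [← eU2]
      _ = H - U * Δ * (H * H) := by noncomm_ring
      _ = H := by rw [hh2, mul_zero, sub_zero]
  have ehV : H * V = H := by
    calc H * V = H * (1 - H * Δ * V) := by rw [← eV1]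
      _ = H - (H * H) * (Δ * V) := by noncomm_ring
      _ = H := by rw [hh2, zero_mul, sub_zero]
  have eUΔ : U * Δ = Δ * V := by
    calc U * Δ = U * Δ * ((1 + H * Δ) * V) := by rw [hV1, mul_one]
      _ = (U * (1 + Δ * H)) * (Δ * V) := by noncomm_ring
      _ = Δ * V := by rw [hU2, one_mul]
  have ehU : H * U = V * H := by
    calc H * U = (V * (1 + H * Δ)) * (H * U) := by rw [hV2, one_mul]
      _ = (V * H) * ((1 + Δ * H) * U) := by noncomm_ring
      _ = V * H := by rw [hU1, mul_one]
  have eαh : (U * Δ) * H = 1 - U := by rw [mul_assoc]; exact eUΔH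
  have ehα : H * (U * Δ) = 1 - V := by
    rw [← mul_assoc, ehU, mul_assoc]; exact eVHΔ
  have eU' : U = 1 - (U * Δ) * H := by rw [eαh, sub_sub_cancel]
  have eV' : V = 1 - H * (U * Δ) := by rw [ehα, sub_sub_cancel]
  have core0 : U * (D * Δ + Δ * D + Δ * Δ) * V = 0 := by rw [esq, mul_zero, zero_mul]
  -- the fundamental identity
  have K : D * (U * Δ) + ((U * Δ) * D + (U * Δ) * P * (U * Δ)) = 0 := by
    calc D * (U * Δ) + ((U * Δ) * D + (U * Δ) * P * (U * Δ))
        = D * (U * Δ) + ((U * Δ) * D + ((U * Δ) * (U * Δ) - (U * Δ) * D * (H * (U * Δ)) -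
            ((U * Δ) * H) * (D * (U * Δ)))) := by rw [hP]; noncomm_ring
      _ = D * (U * Δ) + ((U * Δ) * D + ((U * Δ) * (U * Δ) - (U * Δ) * D * (1 - V) -
            (1 - U) * (D * (U * Δ)))) := by rw [ehα, eαh]
      _ = (U * Δ) * (U * Δ) + (U * Δ) * (D * V) + U * (D * (U * Δ)) := by noncomm_ring
      _ = (U * Δ) * (Δ * V) + (U * Δ) * (D * V) + U * (D * (Δ * V)) := by
            nth_rewrite 2 [eUΔ]; nth_rewrite 3 [eUΔ]; rfl
      _ = U * (D * Δ + Δ * D + Δ * Δ) * V := by noncomm_ring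
      _ = 0 := core0
  -- the perturbed chain-map identity for f'
  have E6 : U * (D + Δ) = D * U + (U * Δ) * P * U := by
    rw [← sub_eq_zero, hP]
    calc U * (D + Δ) - (D * U + (U * Δ) * (1 - (D * H + H * D)) * U)
        = U * D + U * Δ - D * U - ((U * Δ) * U - (U * Δ) * D * (H * U) -
            ((U * Δ) * H) * (D * U)) := by noncomm_ring
      _ = U * D + U * Δ - D * U - ((U * Δ) * U - (U * Δ) * D * (V * H) -
            (1 - U) * (D * U)) := by rw [ehU, eαh]
      _ = U * D * (1 - U) + (U * Δ) * (1 - U) + (U * Δ) * (D * (V * H)) := by noncomm_ring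
      _ = U * D * ((U * Δ) * H) + (U * Δ) * ((U * Δ) * H) + (U * Δ) * (D * (V * H)) := by
            rw [← eαh]
      _ = U * (D * Δ + Δ * D + Δ * Δ) * V * H := by
            nth_rewrite 1 [eUΔ]; nth_rewrite 2 [eUΔ]; noncomm_ring
      _ = 0 := by rw [core0, zero_mul]
  -- the perturbed chain-map identity for g'
  have E7 : (D + Δ) * V = V * D + V * P * (U * Δ) := by
    rw [← sub_eq_zero, hP]
    calc (D + Δ) * V - (V * D + V * (1 - (D * H + H * D)) * (U * Δ))
        = D * V + Δ * V - V * D - (V * (U * Δ) - V * D * (H * (U * Δ)) -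
            (V * H) * (D * (U * Δ))) := by noncomm_ring
      _ = D * V + Δ * V - V * D - (V * (U * Δ) - V * D * (1 - V) -
            (H * U) * (D * (U * Δ))) := by rw [ehα, ← ehU]
      _ = (1 - V) * (D * V) + (1 - V) * (Δ * V) + (H * U) * (D * (U * Δ)) := by
            nth_rewrite 1 [eUΔ]; noncomm_ring
      _ = (H * Δ * V) * (D * V) + (H * Δ * V) * (Δ * V) + (H * U) * (D * (U * Δ)) := by
            rw [← eHΔV]
      _ = (H * (Δ * V)) * (D * V) + (H * (Δ * V)) * (Δ * V) + (H * U) * (D * (U * Δ)) := by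
            noncomm_ring
      _ = H * (U * (D * Δ + Δ * D + Δ * Δ) * V) := by
            nth_rewrite 1 [← eUΔ]; nth_rewrite 1 [← eUΔ]; nth_rewrite 3 [eUΔ]; noncomm_ring
      _ = 0 := by rw [core0, mul_zero]
  -- f'g' = 1 identity in the ring
  have E8 : U * V = 1 - H * (U * Δ) - (U * Δ) * H := by
    calc U * V = (1 - (U * Δ) * H) * V := by rw [← eU']
      _ = V - (U * Δ) * (H * V) := by noncomm_ring
      _ = V - (U * Δ) * H := by rw [ehV]
      _ = 1 - H * (U * Δ) - (U * Δ) * H := by rw [eV']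
  -- homotopy identity
  have E9 : (D + Δ) * (H * U) + (H * U) * (D + Δ) = 1 - V * P * U := by
    rw [← sub_eq_zero, hP]
    calc (D + Δ) * (H * U) + (H * U) * (D + Δ) - (1 - V * (1 - (D * H + H * D)) * U)
        = D * (H * U) + Δ * H * U + (H * U) * D + (H * U) * Δ - 1 + V * U -
            V * D * (H * U) - (V * H) * (D * U) := by noncomm_ring
      _ = D * (H * U) + (1 - U) + (V * H) * D + (V * H) * Δ - 1 + V * U -
            V * D * (H * U) - (V * H) * (D * U) := by
            rw [eδhU]; nth_rewrite 2 [ehU]; nth_rewrite 2 [ehU]; rfl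
      _ = D * (H * U) + (1 - U) + (V * H) * D + V * (H * Δ) - 1 + V * U -
            V * D * (H * U) - (V * H) * (D * U) := by noncomm_ring
      _ = D * (H * U) + (1 - U) + (V * H) * D + (1 - V) - 1 + V * U -
            V * D * (H * U) - (V * H) * (D * U) := by rw [eVHΔ]
      _ = (1 - V) * (D * (H * U)) + (V * H) * (D * (1 - U)) + (1 - V) * (1 - U) := by
            noncomm_ring
      _ = (H * Δ * V) * (D * (H * U)) + (V * H) * (D * (Δ * H * U)) +
            (H * Δ * V) * (Δ * H * U) := by rw [← eHΔV, ← eδhU]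
      _ = (H * (Δ * V)) * (D * (H * U)) + (V * H) * (D * (Δ * (H * U))) +
            (H * (Δ * V)) * (Δ * (H * U)) := by noncomm_ring
      _ = H * (U * (D * Δ + Δ * D + Δ * Δ) * V) * H := by
            rw [← ehU]; nth_rewrite 1 [ehU]; nth_rewrite 2 [ehU]; nth_rewrite 2 [ehU];
            rw [← eUΔ]; noncomm_ring
      _ = 0 := by rw [core0, mul_zero, zero_mul]
  -- now the twelve goals
  -- G1
  have c11 : dB.comp δ' = (f.comp (D * (U * Δ))).comp g := by
    show ((dB.comp f).comp (U * Δ)).comp g = (f.comp (D * (U * Δ))).comp g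
    rw [← hfchain]; rfl
  have c12 : δ'.comp dB = (f.comp ((U * Δ) * D)).comp g := by
    show (f.comp (U * Δ)).comp (g.comp dB) = (f.comp ((U * Δ) * D)).comp g
    rw [← hgchain]; rfl
  have c13 : δ'.comp δ' = (f.comp ((U * Δ) * P * (U * Δ))).comp g := rfl
  have G1 : (dB + δ').comp (dB + δ') = 0 := by
    calc (dB + δ').comp (dB + δ')
        = (dB.comp dB + dB.comp δ') + (δ'.comp dB + δ'.comp δ') := by
          rw [AddMonoidHom.add_comp, AddMonoidHom.comp_add, AddMonoidHom.comp_add]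
      _ = (0 + (f.comp (D * (U * Δ))).comp g) +
            ((f.comp ((U * Δ) * D)).comp g +
             (f.comp ((U * Δ) * P * (U * Δ))).comp g) := by
          rw [hdB2, c11, c12, c13]
      _ = (f.comp (D * (U * Δ) + ((U * Δ) * D + (U * Δ) * P * (U * Δ)))).comp g := by
          rw [zero_add]; ext x
          show f ((D * (U * Δ)) (g x)) + (f ((U * Δ * D) (g x)) + f ((U * Δ * P * (U * Δ)) (g x))) =
            f ((D * (U * Δ)) (g x) + ((U * Δ * D) (g x) + (U * Δ * P * (U * Δ)) (g x)))
          rw [map_add, map_add]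
      _ = (f.comp (0 : AddMonoid.End MA)).comp g := by rw [K]
      _ = 0 := by
          ext x
          show f ((0 : AddMonoid.End MA) (g x)) = 0
          exact map_zero f
  -- degrees
  have G2 : ∀ (i : ℤ), ∀ x ∈ 𝒜 i, f' x ∈ ℬ i := fun i x hx => hfdeg i _ (hudeg i x hx)
  have G3 : ∀ (i : ℤ), ∀ x ∈ ℬ i, g' x ∈ 𝒜 i := fun i x hx => hvdeg i _ (hgdeg i x hx)
  have G4 : ∀ (i : ℤ), ∀ x ∈ 𝒜 i, h' x ∈ 𝒜 (i + 1) := fun i x hx => hhdeg i _ (hudeg i x hx)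
  have G5 : ∀ (i : ℤ), ∀ x ∈ ℬ i, δ' x ∈ ℬ (i - 1) := fun i x hx =>
    hfdeg _ _ (hudeg _ _ (hδdeg _ _ (hgdeg _ _ hx)))
  -- G6
  have c61 : f.comp (D * U) = dB.comp f' := by
    show (f.comp dA).comp U = dB.comp f'
    rw [hfchain]; rfl
  have c62 : f.comp ((U * Δ) * P * U) = δ'.comp f' := rfl
  have G6 : f'.comp (dA + δ) = (dB + δ').comp f' := by
    calc f'.comp (dA + δ) = f.comp (U * (D + Δ)) := rfl
      _ = f.comp (D * U + (U * Δ) * P * U) := by rw [E6]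
      _ = f.comp (D * U) + f.comp ((U * Δ) * P * U) := by
          ext x; exact map_add f ((D * U) x) ((U * Δ * P * U) x)
      _ = dB.comp f' + δ'.comp f' := by rw [c61, c62]
      _ = (dB + δ').comp f' := by rw [AddMonoidHom.add_comp]
  -- G7
  have c71 : (V * D).comp g = g'.comp dB := by
    show V.comp (dA.comp g) = g'.comp dB
    rw [hgchain]; rfl
  have c72 : (V * P * (U * Δ)).comp g = g'.comp δ' := rfl
  have G7 : (dA + δ).comp g' = g'.comp (dB + δ') := by
    calc (dA + δ).comp g' = ((D + Δ) * V).comp g := rfl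
      _ = (V * D + V * P * (U * Δ)).comp g := by rw [E7]
      _ = (V * D).comp g + (V * P * (U * Δ)).comp g := by ext x; rfl
      _ = g'.comp dB + g'.comp δ' := by rw [c71, c72]
      _ = g'.comp (dB + δ') := by rw [AddMonoidHom.comp_add]
  -- G8
  have z81 : f.comp (H * (U * Δ)) = 0 := by
    show (f.comp h).comp (U * Δ) = 0
    rw [hfh]; ext x; rfl
  have z82 : (f.comp ((U * Δ) * H)).comp g = 0 := by
    show (f.comp (U * Δ)).comp (h.comp g) = 0
    rw [hhg, AddMonoidHom.comp_zero]
  have G8 : f'.comp g' = AddMonoidHom.id MB := by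
    calc f'.comp g' = (f.comp (U * V)).comp g := rfl
      _ = (f.comp ((1 : AddMonoid.End MA)) - f.comp (H * (U * Δ)) -
            f.comp ((U * Δ) * H)).comp g := by
          rw [E8]; ext x
          show f ((1 - H * (U * Δ) - U * Δ * H) (g x)) = f ((1 : AddMonoid.End MA) (g x)) -
            f ((H * (U * Δ)) (g x)) - f ((U * Δ * H) (g x))
          rw [← map_sub, ← map_sub]; rfl
      _ = (f.comp ((1 : AddMonoid.End MA))).comp g - (f.comp (H * (U * Δ))).comp g -
            (f.comp ((U * Δ) * H)).comp g := by
          rw [AddMonoidHom.sub_comp, AddMonoidHom.sub_comp]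
      _ = AddMonoidHom.id MB := by
          rw [z81, z82, AddMonoidHom.zero_comp, sub_zero, sub_zero]
          show f.comp g = AddMonoidHom.id MB
          exact hfg
  -- G9
  have G9 : (dA + δ).comp h' + h'.comp (dA + δ) = AddMonoidHom.id MA - g'.comp f' := E9
  -- G10
  have e101 : U * (H * U) = H * U := by rw [← mul_assoc, eUh]
  have G10 : f'.comp h' = 0 := by
    calc f'.comp h' = f.comp (U * (H * U)) := rfl
      _ = f.comp (H * U) := by rw [e101]
      _ = 0 := by
          show (f.comp h).comp U = 0
          rw [hfh, AddMonoidHom.zero_comp]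
  -- G11
  have e111 : (H * U) * V = V * H := by rw [ehU, mul_assoc, ehV]
  have G11 : h'.comp g' = 0 := by
    calc h'.comp g' = ((H * U) * V).comp g := rfl
      _ = (V * H).comp g := by rw [e111]
      _ = 0 := by
          show V.comp (h.comp g) = 0
          rw [hhg, AddMonoidHom.comp_zero]
  -- G12
  have e121 : (H * U) * (H * U) = (0 : AddMonoid.End MA) := by
    calc (H * U) * (H * U) = H * (U * H) * U := by noncomm_ring
      _ = (H * H) * U := by rw [eUh]
      _ = 0 := by rw [hh2, zero_mul]
  have G12 : h'.comp h' = 0 := e121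
  exact ⟨G1, G2, G3, G4, G5, G6, G7, G8, G9, G10, G11, G12⟩
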